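/- Let B and B' be unital associative \(\mathbb{C}\)-algebras with B' having a countable basis, let M be a B-module, and let M' be a B'-module having no B'-invariant subspaces other than 0 and M' (strictly simple). Then the \(B \otimes B'\)-module \(M \otimes M'\) is simple if and only if M is a simple B-module. -/

import Mathlib

open Cardinal

noncomputable section

namespace TensorSimpleAux

variable {D : Type*} [DivisionRing D] [Algebra ℂ D]

/-- Double centralizer of an element, as a subfield. -/
def dc (x : D) : Subfield D :=
  { Subring.centralizer (Set.centralizer {x}) with
    inv_mem' := fun _ ha => Set.inv_mem_centralizer₀ ha }

omit [Algebra ℂ D] in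
lemma mem_dc_iff {x a : D} : a ∈ dc x ↔ ∀ t ∈ Set.centralizer {x}, t * a = a * t := Iff.rfl

omit [Algebra ℂ D] in
lemma self_mem_dc (x : D) : x ∈ dc x := fun t ht => (ht x rfl).symm

lemma algebraMap_mem_dc (x : D) (c : ℂ) : algebraMap ℂ D c ∈ dc x :=
  fun t _ => (Algebra.commutes c t).symm

omit [Algebra ℂ D] in
lemma mem_centralizer_self (x : D) : x ∈ Set.centralizer ({x} : Set D) :=
  fun y hy => by rw [Set.mem_singleton_iff] at hy; rw [hy]

omit [Algebra ℂ D] in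
lemma dc_subset_centralizer {x a : D} (ha : a ∈ dc x) : a ∈ Set.centralizer {x} :=
  fun m hm => by
    rw [Set.mem_singleton_iff] at hm; rw [hm]
    exact ha x (mem_centralizer_self x)

omit [Algebra ℂ D] in
lemma dc_comm {x : D} (a b : dc x) : a * b = b * a := by
  have := a.2 b.1 (dc_subset_centralizer b.2)
  exact Subtype.ext this.symm

instance dcField (x : D) : Field (dc x) :=
  { (inferInstance : DivisionRing (dc x)) with
    mul_comm := dc_comm }

instance dcAlgebra (x : D) : Algebra ℂ (dc x) :=
  RingHom.toAlgebra ((algebraMap ℂ D).codRestrict (dc x).toSubring (algebraMap_mem_dc x))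

lemma dc_algebraMap_val (x : D) (c : ℂ) :
    ((algebraMap ℂ (dc x) c : dc x) : D) = algebraMap ℂ D c := rfl

/-- The inclusion as an `AlgHom`. -/
def dcVal (x : D) : dc x →ₐ[ℂ] D :=
  { (dc x).subtype with commutes' := fun _ => rfl }

lemma dcVal_apply (x : D) (a : dc x) : dcVal x a = (a : D) := rfl

lemma exists_algebraMap_eq (h : Module.rank ℂ D ≤ ℵ₀) (x : D) :
    ∃ c : ℂ, algebraMap ℂ D c = x := by
  by_cases halg : IsAlgebraic ℂ x
  · have hint : IsIntegral ℂ x := halg.isIntegral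
    have hirr := minpoly.irreducible hint
    have hdeg : (minpoly ℂ x).degree = 1 := IsAlgClosed.degree_eq_one_of_irreducible ℂ hirr
    have hmonic : (minpoly ℂ x).Monic := minpoly.monic hint
    have heq : minpoly ℂ x = Polynomial.X + Polynomial.C ((minpoly ℂ x).coeff 0) := by
      have h1 := Polynomial.eq_X_add_C_of_degree_le_one hdeg.le
      have : (minpoly ℂ x).coeff 1 = 1 := by
        have : (minpoly ℂ x).natDegree = 1 := Polynomial.natDegree_eq_of_degree_eq_some hdeg
        rw [← this]; exact hmonic.coeff_natDegree
      rw [this] at h1; simpa using h1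
    refine ⟨-(minpoly ℂ x).coeff 0, ?_⟩
    have := minpoly.aeval ℂ x
    rw [heq] at this
    simp only [map_add, Polynomial.aeval_X, Polynomial.aeval_C] at this
    rw [map_neg]
    linear_combination (norm := module) -this
  · set E := dc x
    have hx' : Transcendental ℂ (⟨x, self_mem_dc x⟩ : E) := by
      intro hA
      exact halg (by simpa [dcVal_apply] using hA.algHom (dcVal x))
    have li := hx'.linearIndependent_sub_inv
    -- map to D
    have hinj : Function.Injective (dcVal x).toLinearMap := Subtype.val_injective
    have li2 : LinearIndependent ℂ (fun c : ℂ => (dcVal x) ((⟨x, self_mem_dc x⟩ - algebraMap ℂ E c)⁻¹)) :=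
      li.map' (dcVal x).toLinearMap (LinearMap.ker_eq_bot.mpr hinj)
    have hcard := li2.cardinal_lift_le_rank
    have hfin : (Cardinal.continuum : Cardinal) ≤ ℵ₀ := by
      have h2 := hcard.trans (Cardinal.lift_le.mpr h)
      rwa [mk_complex, Cardinal.lift_continuum, Cardinal.lift_aleph0] at h2
    exact absurd hfin (not_le.mpr Cardinal.aleph0_lt_continuum)


section Reps

variable {B' : Type*} [Ring B'] [Algebra ℂ B']
  {M' : Type*} [AddCommGroup M'] [Module ℂ M'] [Module B' M']
  [IsScalarTower ℂ B' M'] [SMulCommClass ℂ B' M']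

variable (B') in
/-- The hypothesis of strict simplicity. -/
def Strict (M' : Type*) [AddCommGroup M'] [Module ℂ M'] [Module B' M'] : Prop :=
  ∀ N : Submodule ℂ M', (∀ (b' : B'), ∀ v ∈ N, b' • v ∈ N) → N = ⊥ ∨ N = ⊤

lemma isSimpleModule_of_strict (hnt : Nontrivial M') (hstrict : Strict B' M') :
    IsSimpleModule B' M' := by
  rw [isSimpleModule_iff]
  constructor
  intro N
  rcases hstrict (N.restrictScalars ℂ) (fun b' v hv => N.smul_mem b' hv) with h | h
  · exact Or.inl ((Submodule.restrictScalars_eq_bot_iff ℂ B' M').mp h)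
  · exact Or.inr ((Submodule.restrictScalars_eq_top_iff ℂ B' M').mp h)

/-- Action on `v₀` as a `ℂ`-linear map. -/
def actOn (v₀ : M') : B' →ₗ[ℂ] M' where
  toFun b := b • v₀
  map_add' a b := add_smul a b v₀
  map_smul' c b := smul_assoc c b v₀

lemma rank_le_aleph0 {ι : Type*} [Countable ι] (bB' : Module.Basis ι ℂ B')
    (hstrict : Strict B' M') {v₀ : M'} (hv₀ : v₀ ≠ 0) :
    Module.rank ℂ M' ≤ Cardinal.aleph0 := by
  classical
  set g : ι → M' := fun i => bB' i • v₀ with hg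
  set S : Submodule ℂ M' := Submodule.span ℂ (Set.range g) with hS
  have hrange : LinearMap.range (actOn (B' := B') v₀) = S := by
    rw [← Submodule.map_top, ← bB'.span_eq, Submodule.map_span, ← Set.range_comp]
    rfl
  have hSmem : ∀ b : B', b • v₀ ∈ S := fun b => by
    rw [← hrange]; exact ⟨b, rfl⟩
  have hinv : ∀ (b' : B'), ∀ v ∈ S, b' • v ∈ S := by
    intro b' v hv
    rw [← hrange] at hv
    obtain ⟨b, rfl⟩ := hv
    have : b' • (actOn (B' := B') v₀) b = (b' * b) • v₀ := (mul_smul b' b v₀).symm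
    rw [this]
    exact hSmem _
  have hne : S ≠ ⊥ := by
    intro h
    apply hv₀
    have : v₀ ∈ S := by simpa [actOn] using hSmem 1
    rwa [h, Submodule.mem_bot] at this
  have hStop : S = ⊤ := (hstrict S hinv).resolve_left hne
  have h1 : Module.rank ℂ M' = Module.rank ℂ S := by
    rw [hStop]; exact (Submodule.topEquiv.rank_eq).symm
  rw [h1, hS]
  have : Countable (Set.range g) := Set.countable_range g
  exact (rank_span_le (R := ℂ) (Set.range g)).trans Cardinal.mk_le_aleph0

lemma schur {ι : Type*} [Countable ι] (bB' : Module.Basis ι ℂ B')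
    (hnt : Nontrivial M') (hstrict : Strict B' M')
    (ψ : M' →ₗ[ℂ] M') (hcomm : ∀ (b' : B') (u : M'), ψ (b' • u) = b' • ψ u) :
    ∃ c : ℂ, ∀ u, ψ u = c • u := by
  classical
  haveI := isSimpleModule_of_strict hnt hstrict
  haveI : SMulCommClass B' ℂ M' := SMulCommClass.symm ℂ B' M'
  letI : DivisionRing (Module.End B' M') := Module.End.instDivisionRing
  obtain ⟨v₀, hv₀⟩ := exists_ne (0 : M')
  -- evaluation at v₀
  let ev : Module.End B' M' →ₗ[ℂ] M' :=
    { toFun := fun φ => φ v₀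
      map_add' := fun φ φ' => rfl
      map_smul' := fun c φ => rfl }
  have key : ∀ φ : Module.End B' M', φ v₀ = 0 → φ = 0 := by
    intro φ h0
    rcases LinearMap.injective_or_eq_zero φ with hi | hz
    · exact absurd (hi (show φ v₀ = φ 0 by simpa using h0)) hv₀
    · exact hz
  have hevinj : Function.Injective ev := by
    intro φ φ' h
    have h0 : φ - φ' = 0 := key (φ - φ') (by
      have : φ v₀ = φ' v₀ := h
      simp [LinearMap.sub_apply, this])
    exact sub_eq_zero.mp h0
  have hrank : Module.rank ℂ (Module.End B' M') ≤ Cardinal.aleph0 :=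
    (LinearMap.rank_le_of_injective _ hevinj).trans (rank_le_aleph0 bB' hstrict hv₀)
  let Ψ : Module.End B' M' :=
    { toFun := ψ
      map_add' := ψ.map_add
      map_smul' := fun b' u => hcomm b' u }
  obtain ⟨c, hc⟩ := exists_algebraMap_eq hrank Ψ
  refine ⟨c, fun u => ?_⟩
  have : Ψ u = (algebraMap ℂ (Module.End B' M') c) u := by rw [hc]
  rw [Algebra.algebraMap_eq_smul_one] at this
  have h' : Ψ u = c • u := by simpa using this
  exact h'


lemma density {ι : Type*} [Countable ι] (bB' : Module.Basis ι ℂ B')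
    (hnt : Nontrivial M') (hstrict : Strict B' M') :
    ∀ (n : ℕ) (v : Fin n → M'), LinearIndependent ℂ v → ∀ w : Fin n → M',
      ∃ b' : B', ∀ i, b' • v i = w i := by
  intro n
  induction n with
  | zero => exact fun v _ w => ⟨0, fun i => i.elim0⟩
  | succ n IH =>
    classical
    have Q : ∀ (v : Fin (n+1) → M'), LinearIndependent ℂ v → ∀ u : M',
        ∃ b' : B', (∀ i : Fin n, b' • v i.castSucc = 0) ∧ b' • v (Fin.last n) = u := by
      intro v hv u
      set W : Submodule ℂ M' :=
        { carrier := {x | ∃ b' : B',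
            (∀ i : Fin n, b' • v i.castSucc = 0) ∧ b' • v (Fin.last n) = x}
          add_mem' := by
            rintro a b ⟨b1, h1, rfl⟩ ⟨b2, h2, rfl⟩
            exact ⟨b1 + b2, fun i => by rw [add_smul, h1 i, h2 i, add_zero],
              by rw [add_smul]⟩
          zero_mem' := ⟨0, fun i => zero_smul _ _, zero_smul _ _⟩
          smul_mem' := by
            rintro c a ⟨b1, h1, rfl⟩
            exact ⟨c • b1, fun i => by rw [smul_assoc, h1 i, smul_zero],
              by rw [smul_assoc]⟩ } with hWdef
      have hinv : ∀ (b'' : B'), ∀ x ∈ W, b'' • x ∈ W := by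
        rintro b'' x ⟨b1, h1, rfl⟩
        exact ⟨b'' * b1, fun i => by rw [mul_smul, h1 i, smul_zero], by rw [mul_smul]⟩
      rcases hstrict W hinv with hbot | htop
      · exfalso
        have hkill : ∀ b : B', (∀ i : Fin n, b • v i.castSucc = 0) →
            b • v (Fin.last n) = 0 := by
          intro b hb
          have hmem : b • v (Fin.last n) ∈ W := ⟨b, hb, rfl⟩
          rw [hbot] at hmem
          simpa using hmem
        have huniq : ∀ b c : B', (∀ k : Fin n, b • v k.castSucc = c • v k.castSucc) →
            b • v (Fin.last n) = c • v (Fin.last n) := by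
          intro b c h
          have := hkill (b - c) (fun i => by rw [sub_smul, h i, sub_self])
          rwa [sub_smul, sub_eq_zero] at this
        have hvc : LinearIndependent ℂ (fun i : Fin n => v i.castSucc) :=
          hv.comp Fin.castSucc (Fin.castSucc_injective n)
        obtain ⟨pick, hpick⟩ : ∃ pick : Fin n → M' → B',
            ∀ (i : Fin n) (u' : M') (k : Fin n),
              pick i u' • v k.castSucc = (Pi.single i u' : Fin n → M') k := by
          refine ⟨fun i u' => (IH _ hvc (Pi.single i u')).choose, fun i u' k => ?_⟩
          exact (IH _ hvc (Pi.single i u')).choose_spec k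
        set ψ : Fin n → (M' →ₗ[ℂ] M') := fun i =>
          { toFun := fun u' => pick i u' • v (Fin.last n)
            map_add' := fun a b => by
              have h := huniq (pick i (a + b)) (pick i a + pick i b) (fun k => by
                rw [hpick, add_smul, hpick, hpick, Pi.single_add, Pi.add_apply])
              show pick i (a + b) • v (Fin.last n)
                = pick i a • v (Fin.last n) + pick i b • v (Fin.last n)
              rw [h, add_smul]
            map_smul' := fun cc a => by
              have h := huniq (pick i (cc • a)) (cc • pick i a) (fun k => by
                rw [hpick, smul_assoc, hpick, Pi.single_smul, Pi.smul_apply])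
              show pick i (cc • a) • v (Fin.last n) = cc • (pick i a • v (Fin.last n))
              rw [h, smul_assoc] } with hψdef
        have hψcomm : ∀ (i : Fin n) (b'' : B') (u' : M'),
            (ψ i) (b'' • u') = b'' • (ψ i) u' := by
          intro i b'' u'
          have h := huniq (pick i (b'' • u')) (b'' * pick i u') (fun k => by
            rw [hpick, mul_smul, hpick]
            by_cases hk : k = i
            · subst hk; simp
            · simp [Pi.single_eq_of_ne hk])
          show pick i (b'' • u') • v (Fin.last n) = b'' • (pick i u' • v (Fin.last n))
          rw [h, mul_smul]
        obtain ⟨c, hc⟩ : ∃ c : Fin n → ℂ,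
            ∀ (i : Fin n) (u' : M'), pick i u' • v (Fin.last n) = c i • u' := by
          refine ⟨fun i => (schur bB' hnt hstrict (ψ i) (hψcomm i)).choose, fun i u' => ?_⟩
          exact (schur bB' hnt hstrict (ψ i) (hψcomm i)).choose_spec u'
        set b : B' := ∑ i : Fin n, pick i (v i.castSucc) with hbdef
        have hb : ∀ k : Fin n, b • v k.castSucc = v k.castSucc := by
          intro k
          rw [hbdef, Finset.sum_smul]
          have : ∀ i : Fin n, pick i (v i.castSucc) • v k.castSucc
              = (Pi.single i (v i.castSucc) : Fin n → M') k := fun i => hpick i _ k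
          rw [Finset.sum_congr rfl (fun i _ => this i), ← Finset.sum_apply,
            Finset.univ_sum_single]
        have hlast : v (Fin.last n) = b • v (Fin.last n) := by
          have := hkill (1 - b) (fun k => by rw [sub_smul, one_smul, hb, sub_self])
          rw [sub_smul, one_smul, sub_eq_zero] at this
          exact this
        have hrel : v (Fin.last n) = ∑ i : Fin n, c i • v i.castSucc := by
          rw [hlast, hbdef, Finset.sum_smul]
          exact Finset.sum_congr rfl (fun i _ => hc i _)
        set g : Fin (n+1) → ℂ := Fin.snoc (fun i => c i) (-1) with hgdef
        have hsum : ∑ j, g j • v j = 0 := by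
          rw [Fin.sum_univ_castSucc]
          have h1 : ∀ i : Fin n, g i.castSucc = c i := fun i => Fin.snoc_castSucc _ _ _
          have h2 : g (Fin.last n) = -1 := Fin.snoc_last _ _
          rw [h2, Finset.sum_congr rfl (fun i _ => by rw [h1 i]), ← hrel]
          simp
        have := Fintype.linearIndependent_iff.mp hv g hsum (Fin.last n)
        rw [hgdef] at this
        simp at this
      · have : u ∈ W := by rw [htop]; trivial
        exact this
    -- now combine via swaps
    intro v hv w
    have hQj : ∀ j : Fin (n+1), ∃ b' : B', ∀ k, b' • v k = if k = j then w j else 0 := by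
      intro j
      set σ := Equiv.swap j (Fin.last n) with hσdef
      obtain ⟨b', hb0, hblast⟩ := Q (v ∘ σ) (hv.comp σ σ.injective) (w j)
      refine ⟨b', fun k => ?_⟩
      by_cases hk : k = j
      · subst hk
        rw [if_pos rfl]
        have : (v ∘ σ) (Fin.last n) = v k := by
          simp [hσdef, Equiv.swap_apply_right]
        rwa [this] at hblast
      · rw [if_neg hk]
        have h1 : σ k ≠ Fin.last n := by
          rw [hσdef]
          intro h
          apply hk
          have := congrArg (Equiv.swap j (Fin.last n)) h
          rwa [Equiv.swap_apply_self, Equiv.swap_apply_right] at this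
        obtain ⟨i, hi⟩ := Fin.exists_castSucc_eq.mpr h1
        have h2 := hb0 i
        have h3 : (v ∘ σ) i.castSucc = v k := by
          rw [Function.comp_apply, hi, hσdef, Equiv.swap_apply_self]
        rwa [h3] at h2
    choose bs hbs using hQj
    refine ⟨∑ j, bs j, fun k => ?_⟩
    rw [Finset.sum_smul, Finset.sum_congr rfl (fun j _ => hbs j k)]
    simp

end Reps

open TensorProduct in
lemma tmul_ne_zero {V W : Type*} [AddCommGroup V] [Module ℂ V] [AddCommGroup W] [Module ℂ W]
    {m : V} {v : W} (hm : m ≠ 0) (hv : v ≠ 0) : m ⊗ₜ[ℂ] v ≠ 0 := by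
  obtain ⟨φ, hφ⟩ : ∃ φ : Module.Dual ℂ V, φ m ≠ 0 := by
    by_contra h; push_neg at h
    exact hm ((Module.forall_dual_apply_eq_zero_iff ℂ m).mp h)
  obtain ⟨ψ, hψ⟩ : ∃ ψ : Module.Dual ℂ W, ψ v ≠ 0 := by
    by_contra h; push_neg at h
    exact hv ((Module.forall_dual_apply_eq_zero_iff ℂ v).mp h)
  intro h0
  set F : V ⊗[ℂ] W →ₗ[ℂ] ℂ :=
    (TensorProduct.lid ℂ ℂ).toLinearMap.comp (TensorProduct.map φ ψ) with hF
  have hFtm : F (m ⊗ₜ[ℂ] v) = φ m * ψ v := by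
    simp [hF, TensorProduct.map_tmul, TensorProduct.lid_tmul, smul_eq_mul]
  rw [h0, map_zero] at hFtm
  exact mul_ne_zero hφ hψ hFtm.symm

end TensorSimpleAux

open TensorProduct TensorSimpleAux

theorem tensor_simple_iff_simple
    (B B' : Type*) [Ring B] [Algebra ℂ B] [Ring B'] [Algebra ℂ B']
    (ι : Type*) [Countable ι] (bB' : Module.Basis ι ℂ B')
    (M : Type*) [AddCommGroup M] [Module ℂ M] [Module B M]
    [IsScalarTower ℂ B M] [SMulCommClass ℂ B M]
    (M' : Type*) [AddCommGroup M'] [Module ℂ M'] [Module B' M']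
    [IsScalarTower ℂ B' M'] [SMulCommClass ℂ B' M']
    (hM'nt : Nontrivial M')
    (hM'strict : ∀ N : Submodule ℂ M', (∀ (b' : B'), ∀ v ∈ N, b' • v ∈ N) → N = ⊥ ∨ N = ⊤) :
    ((Nontrivial (M ⊗[ℂ] M') ∧
      ∀ U : Submodule ℂ (M ⊗[ℂ] M'),
        (∀ (b : B) (b' : B'), ∀ z ∈ U,
          TensorProduct.map
            (Algebra.lsmul ℂ ℂ M b : M →ₗ[ℂ] M)
            (Algebra.lsmul ℂ ℂ M' b' : M' →ₗ[ℂ] M') z ∈ U) →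
        U = ⊥ ∨ U = ⊤)
      ↔ IsSimpleModule B M) := by
  classical
  have hstrict' : Strict B' M' := hM'strict
  obtain ⟨v₀, hv₀⟩ := exists_ne (0 : M')
  constructor
  · rintro ⟨hnt, hsimp⟩
    haveI hntM : Nontrivial M := by
      by_contra h
      rw [not_nontrivial_iff_subsingleton] at h
      obtain ⟨x, y, hxy⟩ := hnt
      apply hxy
      have hzero : ∀ z : M ⊗[ℂ] M', z = 0 := by
        intro z
        induction z using TensorProduct.induction_on with
        | zero => rfl
        | tmul m v => rw [Subsingleton.elim m 0, TensorProduct.zero_tmul]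
        | add a b ha hb => rw [ha, hb, add_zero]
      rw [hzero x, hzero y]
    rw [isSimpleModule_iff]
    refine ⟨fun N => ?_⟩
    set Nc : Submodule ℂ M := Submodule.restrictScalars ℂ N with hNc
    set F : (Nc ⊗[ℂ] M') →ₗ[ℂ] (M ⊗[ℂ] M') :=
      TensorProduct.map Nc.subtype (LinearMap.id : M' →ₗ[ℂ] M') with hF
    set U : Submodule ℂ (M ⊗[ℂ] M') := LinearMap.range F with hU
    have hinvU : ∀ (b : B) (b' : B'), ∀ z ∈ U,
        TensorProduct.map (Algebra.lsmul ℂ ℂ M b : M →ₗ[ℂ] M)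
          (Algebra.lsmul ℂ ℂ M' b' : M' →ₗ[ℂ] M') z ∈ U := by
      rintro b b' z ⟨y, rfl⟩
      set bN : Nc →ₗ[ℂ] Nc :=
        { toFun := fun x => ⟨b • x.1, N.smul_mem b x.2⟩
          map_add' := fun x y => by ext; simp [smul_add]
          map_smul' := fun c x => by ext; simp [smul_comm c b x.1] } with hbN
      have hcomp : (TensorProduct.map (Algebra.lsmul ℂ ℂ M b : M →ₗ[ℂ] M)
            (Algebra.lsmul ℂ ℂ M' b' : M' →ₗ[ℂ] M')).comp F
          = F.comp (TensorProduct.map bN (Algebra.lsmul ℂ ℂ M' b' : M' →ₗ[ℂ] M')) := by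
        rw [hF, ← TensorProduct.map_comp, ← TensorProduct.map_comp]
        congr 1
        all_goals (apply LinearMap.ext; intro x; rfl)
      refine ⟨TensorProduct.map bN (Algebra.lsmul ℂ ℂ M' b' : M' →ₗ[ℂ] M') y, ?_⟩
      rw [← LinearMap.comp_apply, ← hcomp, LinearMap.comp_apply]
    rcases hsimp U hinvU with h | h
    · left
      rw [Submodule.eq_bot_iff]
      intro m hm
      by_contra hm0
      have hmem : F ((⟨m, hm⟩ : Nc) ⊗ₜ[ℂ] v₀) ∈ U := ⟨_, rfl⟩
      rw [h, Submodule.mem_bot] at hmem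
      have : m ⊗ₜ[ℂ] v₀ = 0 := by
        simpa [hF, TensorProduct.map_tmul] using hmem
      exact tmul_ne_zero hm0 hv₀ this
    · right
      rw [Submodule.eq_top_iff']
      intro m
      obtain ⟨ψ0, hψ0⟩ : ∃ ψ : Module.Dual ℂ M', ψ v₀ ≠ 0 := by
        by_contra hcon; push_neg at hcon
        exact hv₀ ((Module.forall_dual_apply_eq_zero_iff ℂ v₀).mp hcon)
      set ψ : Module.Dual ℂ M' := (ψ0 v₀)⁻¹ • ψ0 with hψ
      have hψv₀ : ψ v₀ = 1 := by
        simp [hψ, inv_mul_cancel₀ hψ0]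
      set π : (M ⊗[ℂ] M') →ₗ[ℂ] M :=
        (TensorProduct.rid ℂ M).toLinearMap.comp (LinearMap.lTensor M ψ) with hπ
      have hπF : ∀ y : Nc ⊗[ℂ] M', π (F y) ∈ N := by
        intro y
        induction y using TensorProduct.induction_on with
        | zero => simp
        | tmul x v =>
          have : π (F (x ⊗ₜ[ℂ] v)) = ψ v • x.1 := by
            simp [hπ, hF, TensorProduct.map_tmul, TensorProduct.rid_tmul]
          rw [this]
          exact Nc.smul_mem (ψ v) x.2
        | add a c ha hc => rw [map_add, map_add]; exact N.add_mem ha hc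
      have hmv : m ⊗ₜ[ℂ] v₀ ∈ U := by rw [h]; trivial
      obtain ⟨y, hy⟩ := hmv
      have hπm : π (m ⊗ₜ[ℂ] v₀) = m := by
        simp [hπ, TensorProduct.rid_tmul, hψv₀]
      rw [← hπm, ← hy]
      exact hπF y
  · intro hM
    haveI := hM
    haveI hntM : Nontrivial M := IsSimpleModule.nontrivial B M
    obtain ⟨m₁, hm₁⟩ := exists_ne (0 : M)
    refine ⟨⟨⟨m₁ ⊗ₜ[ℂ] v₀, 0, tmul_ne_zero hm₁ hv₀⟩⟩, ?_⟩
    intro U hinv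
    by_cases hU : U = ⊥
    · exact Or.inl hU
    right
    obtain ⟨z, hzU, hz0⟩ := (Submodule.ne_bot_iff U).mp hU
    set bb := Module.Basis.ofVectorSpace ℂ M' with hbb
    set e : (M ⊗[ℂ] M') ≃ₗ[ℂ] (Module.Basis.ofVectorSpaceIndex ℂ M' →₀ M) :=
      (TensorProduct.congr (LinearEquiv.refl ℂ M) bb.repr).trans
        (TensorProduct.finsuppScalarRight ℂ ℂ M _) with he
    set f := e z with hf
    have hfne : f ≠ 0 := by
      intro h
      apply hz0
      have := congrArg e.symm h
      rwa [hf, LinearEquiv.symm_apply_apply, map_zero] at this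
    have htm : ∀ (m : M) (j : Module.Basis.ofVectorSpaceIndex ℂ M'),
        e (m ⊗ₜ[ℂ] (bb j : M')) = Finsupp.single j m := by
      intro m j
      rw [he]
      simp only [LinearEquiv.trans_apply, TensorProduct.congr_tmul, LinearEquiv.refl_apply,
        Module.Basis.repr_self, TensorProduct.finsuppScalarRight_apply_tmul]
      rw [Finsupp.sum_single_index (by simp)]
      rw [one_smul]
    have hzrep : z = ∑ j ∈ f.support, (f j) ⊗ₜ[ℂ] (bb j : M') := by
      apply e.injective
      rw [map_sum, Finset.sum_congr rfl (fun j _ => htm (f j) j)]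
      rw [← hf]
      exact (Finsupp.sum_single f).symm
    obtain ⟨j₀, hj₀⟩ := Finsupp.support_nonempty_iff.mpr hfne
    have hm₀ : f j₀ ≠ 0 := Finsupp.mem_support_iff.mp hj₀
    set s := f.support with hs
    set en : ↥s ≃ Fin s.card := s.equivFin with hen
    set idx : Fin s.card → Module.Basis.ofVectorSpaceIndex ℂ M' := fun i => (en.symm i).1 with hidx
    set vv : Fin s.card → M' := fun i => bb (idx i) with hvv
    have hidxinj : Function.Injective idx :=
      Subtype.val_injective.comp en.symm.injective
    have li : LinearIndependent ℂ vv := bb.linearIndependent.comp idx hidxinj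
    have hstep1 : ∀ u : M', (f j₀) ⊗ₜ[ℂ] u ∈ U := by
      intro u
      obtain ⟨b', hb'⟩ := density bB' hM'nt hstrict' s.card vv li
        (fun i => if idx i = j₀ then u else 0)
      have happ := hinv 1 b' z hzU
      have claim : TensorProduct.map (Algebra.lsmul ℂ ℂ M (1 : B) : M →ₗ[ℂ] M)
          (Algebra.lsmul ℂ ℂ M' b' : M' →ₗ[ℂ] M') z = (f j₀) ⊗ₜ[ℂ] u := by
        rw [hzrep, map_sum]
        have hterm : ∀ j ∈ s, TensorProduct.map (Algebra.lsmul ℂ ℂ M (1 : B) : M →ₗ[ℂ] M)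
            (Algebra.lsmul ℂ ℂ M' b' : M' →ₗ[ℂ] M') ((f j) ⊗ₜ[ℂ] (bb j : M'))
            = (f j) ⊗ₜ[ℂ] (if (j : Module.Basis.ofVectorSpaceIndex ℂ M') = j₀ then u else 0) := by
          intro j hj
          rw [TensorProduct.map_tmul]
          have h1 : (Algebra.lsmul ℂ ℂ M (1 : B) : M →ₗ[ℂ] M) (f j) = f j := by
            simp
          have h2 : (Algebra.lsmul ℂ ℂ M' b' : M' →ₗ[ℂ] M') (bb j : M')
              = if (j : Module.Basis.ofVectorSpaceIndex ℂ M') = j₀ then u else 0 := by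
            have h3 := hb' (en ⟨j, hj⟩)
            have h4 : idx (en ⟨j, hj⟩) = j := by
              rw [hidx]; simp [Equiv.symm_apply_apply]
            rw [hvv] at h3
            simp only [h4] at h3
            simpa using h3
          rw [h1, h2]
        rw [Finset.sum_congr rfl hterm]
        rw [Finset.sum_eq_single_of_mem j₀ hj₀ (fun j _ hjne => by
          rw [if_neg hjne, TensorProduct.tmul_zero])]
        rw [if_pos rfl]
      rwa [claim] at happ
    have hstep2 : ∀ (m : M) (u : M'), m ⊗ₜ[ℂ] u ∈ U := by
      intro m u
      obtain ⟨bm, hbm⟩ := IsSimpleModule.toSpanSingleton_surjective B hm₀ m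
      have happ := hinv bm 1 _ (hstep1 u)
      have claim : TensorProduct.map (Algebra.lsmul ℂ ℂ M bm : M →ₗ[ℂ] M)
          (Algebra.lsmul ℂ ℂ M' (1 : B') : M' →ₗ[ℂ] M') ((f j₀) ⊗ₜ[ℂ] u)
          = m ⊗ₜ[ℂ] u := by
        rw [TensorProduct.map_tmul]
        have h1 : (Algebra.lsmul ℂ ℂ M bm : M →ₗ[ℂ] M) (f j₀) = m := by
          have : bm • f j₀ = m := hbm
          simpa using this
        have h2 : (Algebra.lsmul ℂ ℂ M' (1 : B') : M' →ₗ[ℂ] M') u = u := by simp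
        rw [h1, h2]
      rwa [claim] at happ
    rw [eq_top_iff, ← TensorProduct.span_tmul_eq_top ℂ M M', Submodule.span_le]
    rintro _ ⟨m, u, rfl⟩
    exact hstep2 m u
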